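/- Let u, v ∈ ℂ^m and let h : ℂ^m → ℂ^m be a linear map with operator norm ‖h‖ ≤ |⟨u,v⟩|²/(9‖u‖‖v‖). Then the spectral radius of uv* + h is at least |⟨u,v⟩|/2, where uv* denotes the rank-one map w ↦ ⟨w,v⟩u. -/

import Mathlib

open ContinuousLinearMap in
set_option maxHeartbeats 1000000 in
/-- Lemma in linear algebra: if `h` is small compared to `|(u,v)|²/(9‖u‖‖v‖)`,
then the spectral radius of `uv* + h` is at least `|(u,v)|/2`. -/
theorem stmt0 {m : ℕ} (u v : EuclideanSpace ℂ (Fin m))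
    (hu : u ≠ 0) (hv : v ≠ 0)
    (h : EuclideanSpace ℂ (Fin m) →L[ℂ] EuclideanSpace ℂ (Fin m))
    (hnorm : ‖h‖ ≤ ‖(inner ℂ v u : ℂ)‖ ^ 2 / (9 * ‖u‖ * ‖v‖)) :
    ENNReal.ofReal (‖(inner ℂ v u : ℂ)‖ / 2) ≤
      spectralRadius ℂ ((toSpanSingleton ℂ u).comp (innerSL ℂ v) + h) := by
  classical
  set c : ℝ := ‖(inner ℂ v u : ℂ)‖ with hc_def
  rcases eq_or_lt_of_le (norm_nonneg (inner ℂ v u : ℂ)) with hc0 | hc0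
  · rw [show c = 0 from hc0.symm]
    simp
  set A := (toSpanSingleton ℂ u).comp (innerSL ℂ v) + h with hA
  have hun : 0 < ‖u‖ := norm_pos_iff.mpr hu
  have hvn : 0 < ‖v‖ := norm_pos_iff.mpr hv
  have hcs : c ≤ ‖u‖ * ‖v‖ := by
    simpa [hc_def, mul_comm] using norm_inner_le_norm (𝕜 := ℂ) v u
  set ε : ℝ := ‖h‖ with hε_def
  have hε0 : 0 ≤ ε := norm_nonneg _
  have hε1 : ε * (‖v‖ * ‖u‖) ≤ c ^ 2 / 9 := by
    rw [le_div_iff₀ (by positivity)] at hnorm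
    nlinarith [hnorm]
  have hε2 : ε ≤ c / 9 := by
    have : c ^ 2 / (9 * ‖u‖ * ‖v‖) ≤ c / 9 := by
      rw [div_le_div_iff₀ (by positivity) (by norm_num)]
      nlinarith
    linarith [hnorm]
  -- the sequence x n = A^n u
  set x : ℕ → EuclideanSpace ℂ (Fin m) := fun n => (A ^ n) u with hx
  set a : ℕ → ℂ := fun n => (inner ℂ v (x n) : ℂ) with ha
  have hxsucc : ∀ n, x (n + 1) = (a n) • u + h (x n) := by
    intro n
    have : (A ^ (n + 1)) u = A ((A ^ n) u) := by
      rw [pow_succ']; rfl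
    simp only [hx]; rw [this]
    simp only [hA, add_apply, comp_apply, innerSL_apply_apply, toSpanSingleton_apply]
    rfl
  -- key induction
  have key : ∀ n, c * (2 * c / 3) ^ n ≤ ‖a n‖ ∧ 3 * (ε * (‖v‖ * ‖x n‖)) ≤ c * ‖a n‖ := by
    intro n
    induction n with
    | zero =>
      constructor
      · simp [ha, hx, hc_def]
      · have hx0 : x 0 = u := by simp [hx]
        have ha0 : ‖a 0‖ = c := by simp [ha, hx0, hc_def]
        rw [ha0, hx0]
        nlinarith
    | succ n ih =>
      obtain ⟨ih1, ih2⟩ := ih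
      have hxn : 0 ≤ ‖x n‖ := norm_nonneg _
      have han : 0 ≤ ‖a n‖ := norm_nonneg _
      have hstep : a (n + 1) = a n * (inner ℂ v u : ℂ) + (inner ℂ v (h (x n)) : ℂ) := by
        simp only [ha, hxsucc n, inner_add_right, inner_smul_right]
      have hbound : ‖(inner ℂ v (h (x n)) : ℂ)‖ ≤ ε * (‖v‖ * ‖x n‖) := by
        calc ‖(inner ℂ v (h (x n)) : ℂ)‖ ≤ ‖v‖ * ‖h (x n)‖ := norm_inner_le_norm _ _
          _ ≤ ‖v‖ * (ε * ‖x n‖) := by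
              have := h.le_opNorm (x n)
              exact mul_le_mul_of_nonneg_left this hvn.le
          _ = ε * (‖v‖ * ‖x n‖) := by ring
      have hlow : (2 * c / 3) * ‖a n‖ ≤ ‖a (n + 1)‖ := by
        have h1 : ‖a n * (inner ℂ v u : ℂ)‖ ≤ ‖a (n + 1)‖ + ‖(inner ℂ v (h (x n)) : ℂ)‖ := by
          rw [hstep]
          exact norm_le_add_norm_add _ _
        have h2 : ‖a n * (inner ℂ v u : ℂ)‖ = ‖a n‖ * c := by
          rw [norm_mul, hc_def]
        nlinarith [h1, h2, hbound, ih2]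
      constructor
      · calc c * (2 * c / 3) ^ (n + 1) = (2 * c / 3) * (c * (2 * c / 3) ^ n) := by ring
          _ ≤ (2 * c / 3) * ‖a n‖ := by
              apply mul_le_mul_of_nonneg_left ih1 (by positivity)
          _ ≤ ‖a (n + 1)‖ := hlow
      · have hxb : ‖x (n + 1)‖ ≤ ‖a n‖ * ‖u‖ + ε * ‖x n‖ := by
          rw [hxsucc n]
          calc ‖(a n) • u + h (x n)‖ ≤ ‖(a n) • u‖ + ‖h (x n)‖ := norm_add_le _ _
            _ ≤ ‖a n‖ * ‖u‖ + ε * ‖x n‖ := by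
                rw [norm_smul]
                exact add_le_add (le_refl _) (h.le_opNorm (x n))
        have : 3 * (ε * (‖v‖ * ‖x (n + 1)‖)) ≤ (2 * c / 3) * ((2 * c / 3) * ‖a n‖) := by
          have A1 : 3 * (ε * (‖v‖ * ‖x (n + 1)‖)) ≤ 3 * (ε * (‖v‖ * (‖a n‖ * ‖u‖ + ε * ‖x n‖))) := by
            gcongr
          have A2 : 3 * (ε * (‖v‖ * (‖a n‖ * ‖u‖ + ε * ‖x n‖)))
              = (ε * (‖v‖ * ‖u‖)) * (3 * ‖a n‖) + ε * (3 * (ε * (‖v‖ * ‖x n‖))) := by ring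
          have A3 : (ε * (‖v‖ * ‖u‖)) * (3 * ‖a n‖) ≤ (c ^ 2 / 9) * (3 * ‖a n‖) :=
            mul_le_mul_of_nonneg_right hε1 (by positivity)
          have A4 : ε * (3 * (ε * (‖v‖ * ‖x n‖))) ≤ ε * (c * ‖a n‖) :=
            mul_le_mul_of_nonneg_left ih2 hε0
          have A5 : ε * (c * ‖a n‖) ≤ (c / 9) * (c * ‖a n‖) :=
            mul_le_mul_of_nonneg_right hε2 (by positivity)
          nlinarith [A1, A2, A3, A4, A5]
        calc 3 * (ε * (‖v‖ * ‖x (n + 1)‖)) ≤ (2 * c / 3) * ((2 * c / 3) * ‖a n‖) := this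
          _ ≤ (2 * c / 3) * ‖a (n + 1)‖ := mul_le_mul_of_nonneg_left hlow (by positivity)
          _ ≤ c * ‖a (n + 1)‖ := by nlinarith [norm_nonneg (a (n+1))]
  -- norm bound on A^n
  have normA : ∀ n, c / (‖u‖ * ‖v‖) * (2 * c / 3) ^ n ≤ ‖A ^ n‖ := by
    intro n
    have h1 : ‖a n‖ ≤ ‖v‖ * ‖x n‖ := norm_inner_le_norm _ _
    have h2 : ‖x n‖ ≤ ‖A ^ n‖ * ‖u‖ := (A ^ n).le_opNorm u
    have h3 := (key n).1
    have hAn : 0 ≤ ‖A ^ n‖ := norm_nonneg _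
    rw [div_mul_eq_mul_div, div_le_iff₀ (by positivity)]
    calc c * (2 * c / 3) ^ n ≤ ‖a n‖ := h3
      _ ≤ ‖v‖ * ‖x n‖ := h1
      _ ≤ ‖v‖ * (‖A ^ n‖ * ‖u‖) := mul_le_mul_of_nonneg_left h2 hvn.le
      _ = ‖A ^ n‖ * (‖u‖ * ‖v‖) := by ring
  -- eventually ‖A^n‖ ≥ (c/2)^n
  have hC : (0:ℝ) < c / (‖u‖ * ‖v‖) := by positivity
  have hev : ∀ᶠ n : ℕ in Filter.atTop, ((3:ℝ)/4) ^ n < c / (‖u‖ * ‖v‖) := by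
    have := tendsto_pow_atTop_nhds_zero_of_lt_one (by norm_num : (0:ℝ) ≤ 3/4) (by norm_num : (3:ℝ)/4 < 1)
    exact this.eventually_lt_const hC
  have hev2 : ∀ᶠ n : ℕ in Filter.atTop,
      ENNReal.ofReal (c / 2) ≤ (‖A ^ n‖₊ : ENNReal) ^ (1 / (n:ℝ)) := by
    filter_upwards [hev, Filter.eventually_ge_atTop 1] with n hn hn1
    have hn0 : ((n:ℝ)) ≠ 0 := Nat.cast_ne_zero.mpr (by omega)
    have hreal : (c / 2) ^ n ≤ ‖A ^ n‖ := by
      have e1 : (c/2)^n = (3/4)^n * (2*c/3)^n := by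
        rw [← mul_pow]; ring_nf
      have e2 : ((3:ℝ)/4)^n * (2*c/3)^n ≤ (c / (‖u‖ * ‖v‖)) * (2*c/3)^n :=
        mul_le_mul_of_nonneg_right hn.le (by positivity)
      calc (c/2)^n = (3/4)^n * (2*c/3)^n := e1
        _ ≤ (c / (‖u‖ * ‖v‖)) * (2*c/3)^n := e2
        _ ≤ ‖A ^ n‖ := normA n
    have hcoe : (ENNReal.ofReal (c/2)) ^ n ≤ (‖A ^ n‖₊ : ENNReal) := by
      rw [← ENNReal.ofReal_pow (by positivity)]
      rw [← ENNReal.ofReal_coe_nnreal, coe_nnnorm]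
      exact ENNReal.ofReal_le_ofReal hreal
    have hmono := ENNReal.rpow_le_rpow hcoe (by positivity : (0:ℝ) ≤ 1 / (n:ℝ))
    calc ENNReal.ofReal (c / 2)
        = ((ENNReal.ofReal (c/2)) ^ n) ^ (1 / (n:ℝ)) := by
          rw [← ENNReal.rpow_natCast _ n, ← ENNReal.rpow_mul]
          rw [mul_one_div, div_self hn0, ENNReal.rpow_one]
      _ ≤ (‖A ^ n‖₊ : ENNReal) ^ (1 / (n:ℝ)) := hmono
  exact ge_of_tendsto (spectrum.pow_nnnorm_pow_one_div_tendsto_nhds_spectralRadius A) hev2
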